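/- Let R = {x ∈ L : (1-x)^s + x^s - 1 = 0}. Then |R| = p^n + (d_1-1)(d_1-2) + (d_2-1)(d_2-2), where d_1 = gcd(k, p^n+1) and d_2 = gcd(k-1, p^n+1). -/

import Mathlib

open scoped BigOperators

/-- The Weil sum `W_{F,s}(a) = ∑_{x ∈ F} μ(x^s - a x)`, where `μ` is the canonical
additive character `μ(x) = ζ_p^{Tr_{F/𝔽_p}(x)}` of the finite field `F`. -/
noncomputable def weilSum (p : ℕ) (F : Type) [Field F] [Fintype F]
    [Algebra (ZMod p) F] (s : ℕ) (a : F) : ℂ :=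
  ∑ x : F, Complex.exp (2 * Real.pi * Complex.I *
    ((Algebra.trace (ZMod p) F (x ^ s - a * x)).val : ℂ) / (p : ℂ))

open Finset Polynomial

lemma aux_card_pow_eq_one (L : Type) [Field L] [Fintype L] [DecidableEq L] (d : ℕ)
    (hd : 0 < d) (hdvd : d ∣ Fintype.card L - 1) :
    (Finset.univ.filter fun x : L => x ^ d = 1).card = d := by
  obtain ⟨g, hg⟩ := IsCyclic.exists_generator (α := Lˣ)
  have hN : 0 < Fintype.card L - 1 := by
    have : 1 < Fintype.card L := Fintype.one_lt_card
    omega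
  have hord : orderOf g = Fintype.card L - 1 := by
    rw [orderOf_eq_card_of_forall_mem_zpowers hg, Nat.card_eq_fintype_card, Fintype.card_units]
  obtain ⟨m, hm⟩ := hdvd
  have hprim : IsPrimitiveRoot g (Fintype.card L - 1) := hord ▸ IsPrimitiveRoot.orderOf g
  have hprim2 : IsPrimitiveRoot (g ^ m) d := hprim.pow hN (by rw [hm, mul_comm])
  have hprimL : IsPrimitiveRoot ((g ^ m : Lˣ) : L) d :=
    IsPrimitiveRoot.coe_units_iff.mpr hprim2
  have hset : (Finset.univ.filter fun x : L => x ^ d = 1) = (nthRoots d (1 : L)).toFinset := by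
    ext x
    simp [Polynomial.mem_nthRoots hd]
  rw [hset, Multiset.toFinset_card_of_nodup (hprimL.nthRoots_nodup one_ne_zero)]
  exact hprimL.card_nthRoots_one

-- q-power is additive (abstract frobenius hypotheses)
lemma aux_sub_pow {L : Type} [Field L] {q : ℕ}
    (hfrob : ∀ a b : L, (a + b) ^ q = a ^ q + b ^ q) (a b : L) :
    (a - b) ^ q = a ^ q - b ^ q := by
  have h := hfrob (a - b) b
  rw [sub_add_cancel] at h
  linear_combination -h

lemma aux_key {L : Type} [Field L] (q k : ℕ) (hq : 2 ≤ q) (hk : 1 ≤ k)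
    (hfrob : ∀ a b : L, (a + b) ^ q = a ^ q + b ^ q)
    (hq2 : ∀ x : L, x ≠ 0 → x ^ (q * q - 1) = 1)
    (x : L) (hxF : x ^ q ≠ x)
    (hE : (1 - x) * ((1 - x) ^ (q - 1)) ^ k + x * (x ^ (q - 1)) ^ k = 1) :
    (((x ^ (q-1)) ^ k = 1 ∧ ((1-x) ^ (q-1)) ^ k = 1) ∨
      ((x ^ (q-1)) ^ (k-1) = 1 ∧ ((1-x) ^ (q-1)) ^ (k-1) = 1)) ∧
    x ^ (q-1) ≠ (1-x) ^ (q-1) ∧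
    x * (x ^ (q-1) - (1-x) ^ (q-1)) = 1 - (1-x) ^ (q-1) := by
  have hq1 : 1 ≤ q := by omega
  have hqs : q - 1 + 1 = q := by omega
  have hxq : ∀ y : L, y ^ q = y * y ^ (q - 1) := by
    intro y
    conv_lhs => rw [← hqs]
    rw [pow_succ, mul_comm]
  have hx0 : x ≠ 0 := by
    rintro rfl
    exact hxF (by rw [zero_pow (by omega)])
  have hx1 : (1 : L) - x ≠ 0 := by
    intro h
    have hx : x = 1 := by linear_combination -h
    exact hxF (by rw [hx, one_pow])
  set u := x ^ (q - 1) with hu_def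
  set v := (1 - x) ^ (q - 1) with hv_def
  have hu0 : u ≠ 0 := pow_ne_zero _ hx0
  have hv0 : v ≠ 0 := pow_ne_zero _ hx1
  have hxqu : x ^ q = x * u := hxq x
  have h1xq : (1 - x) ^ q = (1 - x) * v := hxq (1 - x)
  have hsum : (1 - x) ^ q + x ^ q = 1 := by
    have h := hfrob (1 - x) x
    rw [sub_add_cancel, one_pow] at h
    exact h.symm
  have hG : (1 - x) * v + x * u = 1 := by
    rw [← hxqu, ← h1xq]; exact hsum
  have hu1 : u ≠ 1 := by
    intro h
    exact hxF (by rw [hxqu, h, mul_one])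
  have hv1 : v ≠ 1 := by
    intro h
    apply hxF
    have : (1 - x) ^ q = 1 - x := by rw [h1xq, h, mul_one]
    have h2 : x ^ q = x := by linear_combination hsum - this
    exact h2
  have huv : u ≠ v := by
    intro h
    exact hv1 (by linear_combination hG - x * h)
  have hxform : x * (u - v) = 1 - v := by linear_combination hG
  -- exponent identity
  have hqq : (q - 1) * q + (q - 1) = q * q - 1 := by
    obtain ⟨m, rfl⟩ : ∃ m, q = m + 1 := ⟨q - 1, by omega⟩
    simp only [Nat.add_sub_cancel]
    symm
    apply Nat.sub_eq_of_eq_add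
    ring
  have hcirc : ∀ y : L, y ≠ 0 → (y ^ (q-1)) ^ q * y ^ (q-1) = 1 := by
    intro y hy
    rw [← pow_mul, ← pow_add, hqq]
    exact hq2 y hy
  have huu : u ^ q * u = 1 := hcirc x hx0
  have hvv : v ^ q * v = 1 := hcirc (1 - x) hx1
  by_cases hA : u ^ k = 1
  · have hB : v ^ k = 1 := by
      have h : (1 - x) * v ^ k = (1 - x) * 1 := by linear_combination hE - x * hA
      exact mul_left_cancel₀ hx1 h
    exact ⟨Or.inl ⟨hA, hB⟩, huv, hxform⟩
  · -- conjugate equation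
    have h0 := congrArg (· ^ q) hE
    rw [hfrob, mul_pow, mul_pow, one_pow, pow_right_comm v k q, pow_right_comm u k q,
      hxqu, h1xq] at h0
    -- h0 : (1-x)*v * (v^q)^k + x*u * (u^q)^k = 1
    have h1 : (v ^ q) ^ k * v ^ k = 1 := by rw [← mul_pow, hvv, one_pow]
    have h2 : (u ^ q) ^ k * u ^ k = 1 := by rw [← mul_pow, huu, one_pow]
    have hC : (1-x) * v * u ^ k + x * u * v ^ k = u ^ k * v ^ k := by
      linear_combination (u ^ k * v ^ k) * h0 - ((1-x) * v * u ^ k) * h1 - (x * u * v ^ k) * h2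
    have hBne : v ^ k ≠ 1 := by
      intro hB
      exact hA (mul_left_cancel₀ hx0 (show x * u ^ k = x * 1 by
        linear_combination hE - (1 - x) * hB))
    have h5 : (1 - u ^ k) * (v - v ^ k) = 0 := by
      linear_combination (v ^ k) * hG - v * hE - hC
    have h6 : (1 - v ^ k) * (u - u ^ k) = 0 := by
      linear_combination (u ^ k) * hG - u * hE - hC
    have hVk : v ^ k = v := by
      rcases mul_eq_zero.mp h5 with h | h
      · exact absurd (by linear_combination -h : u ^ k = 1) hA
      · linear_combination -h
    have hUk : u ^ k = u := by
      rcases mul_eq_zero.mp h6 with h | h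
      · exact absurd (by linear_combination -h : v ^ k = 1) hBne
      · linear_combination -h
    have hks : k - 1 + 1 = k := by omega
    have hu' : u ^ (k - 1) = 1 := by
      have h : u ^ (k - 1) * u = 1 * u := by
        rw [← pow_succ, hks, hUk, one_mul]
      exact mul_right_cancel₀ hu0 h
    have hv' : v ^ (k - 1) = 1 := by
      have h : v ^ (k - 1) * v = 1 * v := by
        rw [← pow_succ, hks, hVk, one_mul]
      exact mul_right_cancel₀ hv0 h
    exact ⟨Or.inr ⟨hu', hv'⟩, huv, hxform⟩

lemma aux_pair {L : Type} [Field L] (q : ℕ) (hq : 2 ≤ q)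
    (hfrob : ∀ a b : L, (a + b) ^ q = a ^ q + b ^ q)
    (u v : L) (huq : u ^ q * u = 1) (hvq : v ^ q * v = 1)
    (hu1 : u ≠ 1) (hv1 : v ≠ 1) (huv : u ≠ v) :
    ((1 - v) / (u - v)) ^ (q - 1) = u ∧
    (1 - (1 - v) / (u - v)) ^ (q - 1) = v ∧
    ((1 - v) / (u - v)) ^ q ≠ (1 - v) / (u - v) := by
  have hqs : q - 1 + 1 = q := by omega
  have hxq : ∀ y : L, y ^ q = y * y ^ (q - 1) := by
    intro y
    conv_lhs => rw [← hqs]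
    rw [pow_succ, mul_comm]
  have hsub : ∀ a b : L, (a - b) ^ q = a ^ q - b ^ q := aux_sub_pow hfrob
  have hu0 : u ≠ 0 := by rintro rfl; rw [mul_zero] at huq; exact zero_ne_one huq
  have hv0 : v ≠ 0 := by rintro rfl; rw [mul_zero] at hvq; exact zero_ne_one hvq
  have huv0 : u - v ≠ 0 := sub_ne_zero.mpr huv
  have hvu0 : v - u ≠ 0 := sub_ne_zero.mpr (Ne.symm huv)
  have h1v : (1 : L) - v ≠ 0 := sub_ne_zero.mpr (Ne.symm hv1)
  have hu1' : u - 1 ≠ 0 := sub_ne_zero.mpr hu1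
  set x : L := (1 - v) / (u - v) with hx_def
  have hx0 : x ≠ 0 := div_ne_zero h1v huv0
  have hx : x * (u - v) = 1 - v := div_mul_cancel₀ _ huv0
  have h1x : (1 - x) * (u - v) = u - 1 := by linear_combination -hx
  have hx1 : (1 : L) - x ≠ 0 := by
    intro h
    rw [h, zero_mul] at h1x
    exact hu1' h1x.symm
  -- q-th powers
  have h7 : x ^ q * (u ^ q - v ^ q) = 1 - v ^ q := by
    have h := congrArg (· ^ q) hx
    rw [mul_pow, hsub u v, hsub 1 v, one_pow] at h
    exact h
  have h8 : x ^ q * (v - u) = u * v - u := by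
    linear_combination (u * v) * h7 - (x ^ q * v) * huq + (x ^ q * u - u) * hvq
  have h9 : (x ^ q - u * x) * (v - u) = 0 := by
    linear_combination h8 + u * hx
  have hxqu : x ^ q = u * x := by
    rcases mul_eq_zero.mp h9 with h | h
    · linear_combination h
    · exact absurd h hvu0
  have h7' : (1 - x) ^ q * (u ^ q - v ^ q) = u ^ q - 1 := by
    have h := congrArg (· ^ q) h1x
    rw [mul_pow, hsub u v, hsub u 1, one_pow] at h
    exact h
  have h8' : (1 - x) ^ q * (v - u) = v - u * v := by
    linear_combination (u * v) * h7' + (v - (1 - x) ^ q * v) * huq + ((1 - x) ^ q * u) * hvq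
  have h9' : ((1 - x) ^ q - v * (1 - x)) * (v - u) = 0 := by
    linear_combination h8' + v * h1x
  have h1xqv : (1 - x) ^ q = v * (1 - x) := by
    rcases mul_eq_zero.mp h9' with h | h
    · linear_combination h
    · exact absurd h hvu0
  refine ⟨?_, ?_, ?_⟩
  · have h : x * x ^ (q - 1) = x * u := by rw [← hxq, hxqu]; ring
    exact mul_left_cancel₀ hx0 h
  · have h : (1 - x) * (1 - x) ^ (q - 1) = (1 - x) * v := by rw [← hxq, h1xqv]; ring
    exact mul_left_cancel₀ hx1 h
  · intro h
    rw [hxqu] at h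
    have : u = 1 := by
      have h' : u * x = 1 * x := by rw [one_mul]; exact h
      exact mul_right_cancel₀ hx0 h'
    exact hu1 this

lemma aux_qq (q : ℕ) (hq : 1 ≤ q) : q * q - 1 = (q - 1) * (q + 1) := by
  obtain ⟨m, rfl⟩ : ∃ m, q = m + 1 := ⟨q - 1, by omega⟩
  simp only [Nat.add_sub_cancel]
  apply Nat.sub_eq_of_eq_add
  ring

lemma aux_harith (m : ℕ) : (m - 1) * (m - 1) - (m - 1) = (m - 1) * (m - 2) := by
  rcases m with _ | _ | t
  · rfl
  · rfl
  · simp only [Nat.add_sub_cancel, show t + 2 - 1 = t + 1 from rfl, show t + 2 - 2 = t from rfl]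
    apply Nat.sub_eq_of_eq_add
    ring


/-- with `R = {x ∈ L : (1-x)^s + x^s = 1}`,
`|R| = p^n + (d₁-1)(d₂-2) + (d₂-1)(d₂-2)` where `d₁ = gcd(k, p^n+1)`,
`d₂ = gcd(k-1, p^n+1)`. -/
theorem card_solution_set (p n : ℕ) [Fact p.Prime] (hn : 0 < n)
    (F L : Type) [Field F] [Fintype F] [Field L] [Fintype L]
    [Algebra (ZMod p) L] [Algebra F L]
    (hF : Fintype.card F = p ^ n) (hL : Fintype.card L = p ^ (2 * n))
    (k s : ℕ) (hsk : s = 1 + k * (p ^ n - 1)) (hs : Nat.Coprime s (p ^ (2 * n) - 1))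
    (hp : Odd p) (hk2 : 2 ≤ k) :
    Nat.card {x : L // (1 - x) ^ s + x ^ s = 1} =
      p ^ n + (Nat.gcd k (p ^ n + 1) - 1) * (Nat.gcd k (p ^ n + 1) - 2) +
        (Nat.gcd (k - 1) (p ^ n + 1) - 1) * (Nat.gcd (k - 1) (p ^ n + 1) - 2) := by
  classical
  have hprime : p.Prime := Fact.out
  set q := p ^ n with hq_def
  have hq : 2 ≤ q := Nat.one_lt_pow (by omega) hprime.two_le
  have hchar : CharP L p := charP_of_injective_algebraMap (algebraMap (ZMod p) L).injective p
  have hfrob : ∀ a b : L, (a + b) ^ q = a ^ q + b ^ q := fun a b => by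
    haveI := hchar; exact add_pow_char_pow a b p n
  have hsub : ∀ a b : L, (a - b) ^ q = a ^ q - b ^ q := aux_sub_pow hfrob
  have hcard : Fintype.card L = q * q := by rw [hL, two_mul, pow_add]
  have hq2 : ∀ x : L, x ≠ 0 → x ^ (q * q - 1) = 1 := by
    intro x hx
    have h := FiniteField.pow_card_sub_one_eq_one x hx
    rwa [hcard] at h
  have hμ : ∀ d : ℕ, 0 < d → d ∣ q * q - 1 →
      (Finset.univ.filter fun z : L => z ^ d = 1).card = d := by
    intro d hd hdvd
    have h := aux_card_pow_eq_one L d hd (by rw [hcard]; exact hdvd)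
    convert h using 2
  have hqs : q - 1 + 1 = q := by omega
  have hks : k - 1 + 1 = k := by omega
  have hxq : ∀ y : L, y ^ q = y * y ^ (q - 1) := by
    intro y
    conv_lhs => rw [← hqs]
    rw [pow_succ, mul_comm]
  have hs0 : 0 < s := by rw [hsk]; exact Nat.lt_of_lt_of_le Nat.zero_lt_one (Nat.le_add_right 1 _)
  have hxs : ∀ y : L, y ^ s = y * (y ^ (q - 1)) ^ k := by
    intro y
    rw [hsk, pow_add, pow_one, ← pow_mul, mul_comm k (q - 1)]
  have hqq : q * q - 1 = (q - 1) * (q + 1) := aux_qq q (by omega)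
  have hcirc : ∀ y : L, y ≠ 0 → (y ^ (q - 1)) ^ (q + 1) = 1 := by
    intro y hy
    rw [← pow_mul, ← hqq]
    exact hq2 y hy
  have hbasic : ∀ x : L, x ^ q ≠ x →
      x ≠ 0 ∧ (1 : L) - x ≠ 0 ∧ x ^ (q - 1) ≠ 1 ∧ (1 - x) ^ (q - 1) ≠ 1 := by
    intro x hxF
    have hx0 : x ≠ 0 := by
      rintro rfl
      exact hxF (by rw [zero_pow (by omega)])
    have hx1 : (1 : L) - x ≠ 0 := by
      intro h
      have hx : x = 1 := by linear_combination -h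
      exact hxF (by rw [hx, one_pow])
    refine ⟨hx0, hx1, ?_, ?_⟩
    · intro h
      exact hxF (by rw [hxq x, h, mul_one])
    · intro h
      apply hxF
      have h2 : (1 - x) ^ q = 1 - x := by rw [hxq (1 - x), h, mul_one]
      rw [hsub, one_pow] at h2
      linear_combination -h2
  -- order helpers
  have hord1 : ∀ (w : L) (a b : ℕ), w ^ a = 1 → w ^ b = 1 → w ^ Nat.gcd a b = 1 := by
    intro w a b ha hb
    exact orderOf_dvd_iff_pow_eq_one.mp
      (Nat.dvd_gcd (orderOf_dvd_of_pow_eq_one ha) (orderOf_dvd_of_pow_eq_one hb))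
  have hord2 : ∀ (w : L) (a b : ℕ), a ∣ b → w ^ a = 1 → w ^ b = 1 := by
    intro w a b hab ha
    exact orderOf_dvd_iff_pow_eq_one.mp (dvd_trans (orderOf_dvd_of_pow_eq_one ha) hab)
  have key : ∀ x : L, x ^ q ≠ x → (1 - x) ^ s + x ^ s = 1 →
      (((x ^ (q-1)) ^ k = 1 ∧ ((1-x) ^ (q-1)) ^ k = 1) ∨
        ((x ^ (q-1)) ^ (k-1) = 1 ∧ ((1-x) ^ (q-1)) ^ (k-1) = 1)) ∧
      x ^ (q-1) ≠ (1-x) ^ (q-1) ∧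
      x * (x ^ (q-1) - (1-x) ^ (q-1)) = 1 - (1-x) ^ (q-1) := by
    intro x hxF hE
    rw [hxs, hxs] at hE
    exact aux_key q k hq (by omega) hfrob hq2 x hxF hE
  -- the finsets
  set S : Finset L := Finset.univ.filter (fun x : L => (1 - x) ^ s + x ^ s = 1) with hS_def
  set S0 : Finset L := Finset.univ.filter (fun x : L => x ^ q = x) with hS0_def
  set S1 : Finset L := Finset.univ.filter
    (fun x : L => ((1 - x) ^ s + x ^ s = 1) ∧ x ^ q ≠ x ∧ (x ^ (q - 1)) ^ k = 1) with hS1_def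
  set S2 : Finset L := Finset.univ.filter
    (fun x : L => ((1 - x) ^ s + x ^ s = 1) ∧ x ^ q ≠ x ∧ (x ^ (q - 1)) ^ (k - 1) = 1)
    with hS2_def
  have hS0sub : ∀ x : L, x ^ q = x → (1 - x) ^ s + x ^ s = 1 := by
    intro x hx
    rcases eq_or_ne x 0 with rfl | hx0
    · simp [zero_pow hs0.ne']
    · rcases eq_or_ne x 1 with rfl | hx1
      · simp [zero_pow hs0.ne']
      · have hxm : x ^ (q - 1) = 1 := by
          have h : x * x ^ (q - 1) = x * 1 := by rw [mul_one, ← hxq, hx]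
          exact mul_left_cancel₀ hx0 h
        have h1x0 : (1 : L) - x ≠ 0 := sub_ne_zero.mpr (fun h => hx1 h.symm)
        have h1xm : (1 - x) ^ (q - 1) = 1 := by
          have h2 : (1 - x) ^ q = 1 - x := by rw [hsub, one_pow, hx]
          have h : (1 - x) * (1 - x) ^ (q - 1) = (1 - x) * 1 := by
            rw [mul_one, ← hxq, h2]
          exact mul_left_cancel₀ h1x0 h
        simp [hxs, hxm, h1xm]
  have hS0card : S0.card = q := by
    have hins : S0 = insert (0 : L)
        (Finset.univ.filter fun z : L => z ^ (q - 1) = 1) := by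
      ext z
      simp only [hS0_def, Finset.mem_filter, Finset.mem_univ, true_and, Finset.mem_insert]
      constructor
      · intro hz
        rcases eq_or_ne z 0 with rfl | hz0
        · exact Or.inl rfl
        · exact Or.inr (mul_left_cancel₀ hz0 (by rw [mul_one, ← hxq, hz]))
      · rintro (rfl | hz)
        · rw [zero_pow (by omega)]
        · rw [hxq, hz, mul_one]
    have h0nm : (0 : L) ∉ Finset.univ.filter fun z : L => z ^ (q - 1) = 1 := by
      simp [zero_pow (show q - 1 ≠ 0 by omega)]
    rw [hins, Finset.card_insert_of_notMem h0nm,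
      hμ (q - 1) (by omega) ⟨q + 1, hqq⟩]
    omega
  -- partition
  have hunion : S = S0 ∪ (S1 ∪ S2) := by
    ext x
    simp only [hS_def, hS0_def, hS1_def, hS2_def, Finset.mem_filter, Finset.mem_univ,
      true_and, Finset.mem_union]
    constructor
    · intro hE
      by_cases hxF : x ^ q = x
      · exact Or.inl hxF
      · rcases (key x hxF hE).1 with ⟨h1, _⟩ | ⟨h1, _⟩
        · exact Or.inr (Or.inl ⟨hE, hxF, h1⟩)
        · exact Or.inr (Or.inr ⟨hE, hxF, h1⟩)
    · rintro (h | ⟨h, _, _⟩ | ⟨h, _, _⟩)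
      · exact hS0sub x h
      · exact h
      · exact h
  have hd01 : Disjoint S0 (S1 ∪ S2) := by
    rw [Finset.disjoint_left]
    intro x hx0 hx12
    simp only [hS0_def, hS1_def, hS2_def, Finset.mem_filter, Finset.mem_univ, true_and,
      Finset.mem_union] at hx0 hx12
    rcases hx12 with ⟨_, h, _⟩ | ⟨_, h, _⟩ <;> exact h hx0
  have hd12 : Disjoint S1 S2 := by
    rw [Finset.disjoint_left]
    intro x h1 h2
    simp only [hS1_def, hS2_def, Finset.mem_filter, Finset.mem_univ, true_and] at h1 h2
    obtain ⟨_, hxF, hk1⟩ := h1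
    obtain ⟨_, _, hk2'⟩ := h2
    apply (hbasic x hxF).2.2.1
    calc x ^ (q-1) = (x ^ (q-1)) ^ (k-1) * x ^ (q-1) := by rw [hk2', one_mul]
      _ = (x ^ (q-1)) ^ k := by rw [← pow_succ, hks]
      _ = 1 := hk1
  have hcardsum : S.card = S0.card + S1.card + S2.card := by
    rw [hunion, Finset.card_union_of_disjoint hd01, Finset.card_union_of_disjoint hd12]
    ring
  -- |S1|
  have hS1card : S1.card = (Nat.gcd k (q+1) - 1) * (Nat.gcd k (q+1) - 2) := by
    set d := Nat.gcd k (q+1) with hd_def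
    have hdpos : 0 < d := Nat.gcd_pos_of_pos_right k (by omega)
    have hdk : d ∣ k := Nat.gcd_dvd_left _ _
    have hdq : d ∣ q + 1 := Nat.gcd_dvd_right _ _
    set M : Finset L := (Finset.univ.filter fun z : L => z ^ d = 1).erase 1 with hM_def
    have hMcard : M.card = d - 1 := by
      rw [hM_def, Finset.card_erase_of_mem (by simp),
        hμ d hdpos (by rw [hqq]; exact hdq.mul_left (q-1))]
    have hbij : S1.card = M.offDiag.card := by
      apply Finset.card_nbij' (fun x => (x ^ (q-1), (1-x) ^ (q-1)))
        (fun b => (1 - b.2) / (b.1 - b.2))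
      · intro x hx
        simp only [hS1_def, Finset.mem_coe, Finset.mem_filter, Finset.mem_univ, true_and] at hx
        obtain ⟨hE, hxF, hA⟩ := hx
        obtain ⟨hx0, hx1, hu1, hv1⟩ := hbasic x hxF
        obtain ⟨hdisj, huv, hform⟩ := key x hxF hE
        have hB : ((1-x) ^ (q-1)) ^ k = 1 := by
          rcases hdisj with ⟨_, hB⟩ | ⟨hu', _⟩
          · exact hB
          · exfalso
            apply hu1
            calc x ^ (q-1) = (x ^ (q-1)) ^ (k-1) * x ^ (q-1) := by rw [hu', one_mul]
              _ = (x ^ (q-1)) ^ k := by rw [← pow_succ, hks]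
              _ = 1 := hA
        rw [Finset.mem_coe, Finset.mem_offDiag]
        refine ⟨?_, ?_, huv⟩
        · rw [hM_def, Finset.mem_erase]
          refine ⟨hu1, ?_⟩
          simp only [Finset.mem_filter, Finset.mem_univ, true_and]
          exact hord1 _ k (q+1) hA (hcirc x hx0)
        · rw [hM_def, Finset.mem_erase]
          refine ⟨hv1, ?_⟩
          simp only [Finset.mem_filter, Finset.mem_univ, true_and]
          exact hord1 _ k (q+1) hB (hcirc (1-x) hx1)
      · rintro ⟨u, v⟩ hb
        rw [Finset.mem_coe, Finset.mem_offDiag] at hb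
        obtain ⟨hu, hv, huv⟩ := hb
        rw [hM_def, Finset.mem_erase] at hu hv
        obtain ⟨hu1, hu'⟩ := hu
        obtain ⟨hv1, hv'⟩ := hv
        simp only [Finset.mem_filter, Finset.mem_univ, true_and] at hu' hv'
        have huk : u ^ k = 1 := hord2 u d k hdk hu'
        have hvk : v ^ k = 1 := hord2 v d k hdk hv'
        have huq : u ^ q * u = 1 := by rw [← pow_succ]; exact hord2 u d (q+1) hdq hu'
        have hvq : v ^ q * v = 1 := by rw [← pow_succ]; exact hord2 v d (q+1) hdq hv'
        obtain ⟨hxu, hxv, hxF⟩ := aux_pair q hq hfrob u v huq hvq hu1 hv1 huv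
        simp only [hS1_def, Finset.mem_coe, Finset.mem_filter, Finset.mem_univ, true_and]
        refine ⟨?_, hxF, by rw [hxu]; exact huk⟩
        rw [hxs, hxs, hxu, hxv, huk, hvk, mul_one, mul_one]
        ring
      · intro x hx
        simp only [hS1_def, Finset.mem_coe, Finset.mem_filter, Finset.mem_univ, true_and] at hx
        obtain ⟨hE, hxF, hA⟩ := hx
        obtain ⟨_, huv, hform⟩ := key x hxF hE
        exact (div_eq_iff (sub_ne_zero.mpr huv)).mpr hform.symm
      · rintro ⟨u, v⟩ hb
        rw [Finset.mem_coe, Finset.mem_offDiag] at hb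
        obtain ⟨hu, hv, huv⟩ := hb
        rw [hM_def, Finset.mem_erase] at hu hv
        obtain ⟨hu1, hu'⟩ := hu
        obtain ⟨hv1, hv'⟩ := hv
        simp only [Finset.mem_filter, Finset.mem_univ, true_and] at hu' hv'
        have huq : u ^ q * u = 1 := by rw [← pow_succ]; exact hord2 u d (q+1) hdq hu'
        have hvq : v ^ q * v = 1 := by rw [← pow_succ]; exact hord2 v d (q+1) hdq hv'
        obtain ⟨hxu, hxv, hxF⟩ := aux_pair q hq hfrob u v huq hvq hu1 hv1 huv
        exact Prod.ext hxu hxv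
    rw [hbij, Finset.offDiag_card, hMcard, aux_harith d]
  -- |S2|
  have hS2card : S2.card = (Nat.gcd (k-1) (q+1) - 1) * (Nat.gcd (k-1) (q+1) - 2) := by
    set d := Nat.gcd (k-1) (q+1) with hd_def
    have hdpos : 0 < d := Nat.gcd_pos_of_pos_right (k-1) (by omega)
    have hdk : d ∣ k - 1 := Nat.gcd_dvd_left _ _
    have hdq : d ∣ q + 1 := Nat.gcd_dvd_right _ _
    set M : Finset L := (Finset.univ.filter fun z : L => z ^ d = 1).erase 1 with hM_def
    have hMcard : M.card = d - 1 := by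
      rw [hM_def, Finset.card_erase_of_mem (by simp),
        hμ d hdpos (by rw [hqq]; exact hdq.mul_left (q-1))]
    have hbij : S2.card = M.offDiag.card := by
      apply Finset.card_nbij' (fun x => (x ^ (q-1), (1-x) ^ (q-1)))
        (fun b => (1 - b.2) / (b.1 - b.2))
      · intro x hx
        simp only [hS2_def, Finset.mem_coe, Finset.mem_filter, Finset.mem_univ, true_and] at hx
        obtain ⟨hE, hxF, hA⟩ := hx
        obtain ⟨hx0, hx1, hu1, hv1⟩ := hbasic x hxF
        obtain ⟨hdisj, huv, hform⟩ := key x hxF hE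
        have hB : ((1-x) ^ (q-1)) ^ (k-1) = 1 := by
          rcases hdisj with ⟨hu', _⟩ | ⟨_, hB⟩
          · exfalso
            apply hu1
            calc x ^ (q-1) = (x ^ (q-1)) ^ (k-1) * x ^ (q-1) := by rw [hA, one_mul]
              _ = (x ^ (q-1)) ^ k := by rw [← pow_succ, hks]
              _ = 1 := hu'
          · exact hB
        rw [Finset.mem_coe, Finset.mem_offDiag]
        refine ⟨?_, ?_, huv⟩
        · rw [hM_def, Finset.mem_erase]
          refine ⟨hu1, ?_⟩
          simp only [Finset.mem_filter, Finset.mem_univ, true_and]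
          exact hord1 _ (k-1) (q+1) hA (hcirc x hx0)
        · rw [hM_def, Finset.mem_erase]
          refine ⟨hv1, ?_⟩
          simp only [Finset.mem_filter, Finset.mem_univ, true_and]
          exact hord1 _ (k-1) (q+1) hB (hcirc (1-x) hx1)
      · rintro ⟨u, v⟩ hb
        rw [Finset.mem_coe, Finset.mem_offDiag] at hb
        obtain ⟨hu, hv, huv⟩ := hb
        rw [hM_def, Finset.mem_erase] at hu hv
        obtain ⟨hu1, hu'⟩ := hu
        obtain ⟨hv1, hv'⟩ := hv
        simp only [Finset.mem_filter, Finset.mem_univ, true_and] at hu' hv'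
        have huk : u ^ (k-1) = 1 := hord2 u d (k-1) hdk hu'
        have hvk : v ^ (k-1) = 1 := hord2 v d (k-1) hdk hv'
        have huq : u ^ q * u = 1 := by rw [← pow_succ]; exact hord2 u d (q+1) hdq hu'
        have hvq : v ^ q * v = 1 := by rw [← pow_succ]; exact hord2 v d (q+1) hdq hv'
        obtain ⟨hxu, hxv, hxF⟩ := aux_pair q hq hfrob u v huq hvq hu1 hv1 huv
        set x : L := (1 - v) / (u - v) with hx_def
        have huk' : u ^ k = u := by rw [← hks, pow_succ, huk, one_mul]
        have hvk' : v ^ k = v := by rw [← hks, pow_succ, hvk, one_mul]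
        simp only [hS2_def, Finset.mem_coe, Finset.mem_filter, Finset.mem_univ, true_and]
        refine ⟨?_, hxF, by rw [hxu]; exact huk⟩
        rw [hxs, hxs, hxu, hxv, huk', hvk']
        have h1 : x ^ q = x * u := by rw [hxq, hxu]
        have h2 : (1-x) ^ q = (1-x) * v := by rw [hxq, hxv]
        have h3 := hfrob (1-x) x
        rw [sub_add_cancel, one_pow] at h3
        linear_combination -h1 - h2 - h3
      · intro x hx
        simp only [hS2_def, Finset.mem_coe, Finset.mem_filter, Finset.mem_univ, true_and] at hx
        obtain ⟨hE, hxF, hA⟩ := hx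
        obtain ⟨_, huv, hform⟩ := key x hxF hE
        exact (div_eq_iff (sub_ne_zero.mpr huv)).mpr hform.symm
      · rintro ⟨u, v⟩ hb
        rw [Finset.mem_coe, Finset.mem_offDiag] at hb
        obtain ⟨hu, hv, huv⟩ := hb
        rw [hM_def, Finset.mem_erase] at hu hv
        obtain ⟨hu1, hu'⟩ := hu
        obtain ⟨hv1, hv'⟩ := hv
        simp only [Finset.mem_filter, Finset.mem_univ, true_and] at hu' hv'
        have huq : u ^ q * u = 1 := by rw [← pow_succ]; exact hord2 u d (q+1) hdq hu'
        have hvq : v ^ q * v = 1 := by rw [← pow_succ]; exact hord2 v d (q+1) hdq hv'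
        obtain ⟨hxu, hxv, hxF⟩ := aux_pair q hq hfrob u v huq hvq hu1 hv1 huv
        exact Prod.ext hxu hxv
    rw [hbij, Finset.offDiag_card, hMcard, aux_harith d]
  have hfinal : Nat.card {x : L // (1 - x) ^ s + x ^ s = 1} = S.card := by
    rw [Nat.card_eq_fintype_card]
    exact Fintype.card_of_subtype S (by simp [hS_def])
  rw [hfinal, hcardsum, hS0card, hS1card, hS2card]
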